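/- If A is a self-adjoint trace-class operator on a Hilbert space such that A + P ≥ 0 for some rank-one orthogonal projection P (equivalently, A has at most one negative eigenvalue), then tr|A| ≤ 2‖A‖_HS + tr(A), where ‖A‖_HS denotes the Hilbert–Schmidt norm. -/
import Mathlib


/-- If `A` is a self-adjoint trace-class operator on a separable Hilbert
space with at most one negative eigenvalue (equivalently `A + P ≥ 0` for some rank-one
orthogonal projection `P`), then `tr|A| ≤ 2‖A‖_HS + tr(A)`.

By the spectral theorem such an operator is determined by its sequence of real
eigenvalues `Λ : ℕ → ℝ` counted with multiplicity (padded by zeros); the trace norm is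
`∑ |Λ n|`, the Hilbert–Schmidt norm is `√(∑ (Λ n)²)` and the trace is `∑ Λ n`. -/
theorem stmt_0 (Λ : ℕ → ℝ) (h_trace_class : Summable (fun n => |Λ n|))
    (h_one_neg : ∀ m n, Λ m < 0 → Λ n < 0 → m = n) :
    ∑' n, |Λ n| ≤ 2 * Real.sqrt (∑' n, (Λ n) ^ 2) + ∑' n, Λ n := by
  have hΛ : Summable Λ := h_trace_class.of_abs
  -- summability of squares
  have hbdd : BddAbove (Set.range fun n => |Λ n|) :=
    h_trace_class.tendsto_atTop_zero.bddAbove_range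
  obtain ⟨C, hC⟩ := hbdd
  have hCle : ∀ n, |Λ n| ≤ C := fun n => hC (Set.mem_range_self n)
  have hsq : Summable (fun n => (Λ n) ^ 2) := by
    apply Summable.of_nonneg_of_le (fun n => sq_nonneg _) (fun n => ?_)
      (h_trace_class.mul_left C)
    calc (Λ n) ^ 2 = |Λ n| * |Λ n| := by rw [← sq_abs, sq]
    _ ≤ C * |Λ n| := mul_le_mul_of_nonneg_right (hCle n) (abs_nonneg _)
  have hsqrt_nonneg : 0 ≤ Real.sqrt (∑' n, (Λ n) ^ 2) := Real.sqrt_nonneg _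
  by_cases hneg : ∃ m, Λ m < 0
  · obtain ⟨m, hm⟩ := hneg
    have hsupp : ∀ n, n ≠ m → |Λ n| - Λ n = 0 := by
      intro n hn
      have : 0 ≤ Λ n := by
        by_contra h
        exact hn (h_one_neg n m (lt_of_not_ge h) hm)
      rw [abs_of_nonneg this]; ring
    have hdiff : ∑' n, (|Λ n| - Λ n) = |Λ m| - Λ m := tsum_eq_single m hsupp
    have htsub : ∑' n, (|Λ n| - Λ n) = (∑' n, |Λ n|) - ∑' n, Λ n :=
      Summable.tsum_sub h_trace_class hΛ
    have hle : (Λ m) ^ 2 ≤ ∑' n, (Λ n) ^ 2 :=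
      Summable.le_tsum hsq m (fun n _ => sq_nonneg _)
    have habs : |Λ m| ≤ Real.sqrt (∑' n, (Λ n) ^ 2) := by
      rw [← Real.sqrt_sq_eq_abs]
      exact Real.sqrt_le_sqrt hle
    have : (∑' n, |Λ n|) - ∑' n, Λ n = |Λ m| - Λ m := by rw [← htsub, hdiff]
    have hmabs : |Λ m| - Λ m = 2 * |Λ m| := by
      rw [abs_of_neg hm]; ring
    nlinarith
  · push_neg at hneg
    have : ∀ n, |Λ n| = Λ n := fun n => abs_of_nonneg (hneg n)
    simp only [this]
    nlinarith
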